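/- Let K, L be compact convex subsets of ℝ^d with K ∪ L convex, and let u be a unit vector. With M_u = {x ∈ M : ⟨u, x⟩ < sup_{y ∈ M} ⟨u, y⟩}, one has (K ∩ L)_u = K_u ∩ L_u. -/

import Mathlib

/-- `M` with its exposed face in direction `u` removed. -/
noncomputable def faceRemoved {d : ℕ} (M : Set (EuclideanSpace ℝ (Fin d)))
    (u : EuclideanSpace ℝ (Fin d)) : Set (EuclideanSpace ℝ (Fin d)) :=
  {x ∈ M | inner ℝ u x < sSup ((fun y => (inner ℝ u y : ℝ)) '' M)}

lemma key_sup_min {d : ℕ} (K L : Set (EuclideanSpace ℝ (Fin d)))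
    (hKc : IsCompact K) (hKne : K.Nonempty)
    (hLc : IsCompact L) (hLne : L.Nonempty)
    (hU : Convex ℝ (K ∪ L))
    (u : EuclideanSpace ℝ (Fin d)) :
    min (sSup ((fun y => (inner ℝ u y : ℝ)) '' K)) (sSup ((fun y => (inner ℝ u y : ℝ)) '' L))
      ≤ sSup ((fun y => (inner ℝ u y : ℝ)) '' (K ∩ L)) := by
  set f : EuclideanSpace ℝ (Fin d) → ℝ := fun y => inner ℝ u y with hf
  have hfc : Continuous f := (innerSL ℝ u).continuous
  obtain ⟨xK, hxK, hmaxK⟩ := hKc.exists_isMaxOn hKne hfc.continuousOn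
  obtain ⟨xL, hxL, hmaxL⟩ := hLc.exists_isMaxOn hLne hfc.continuousOn
  have hsupK : sSup (f '' K) = f xK :=
    IsGreatest.csSup_eq ⟨Set.mem_image_of_mem _ hxK, by
      rintro z ⟨y, hy, rfl⟩; exact hmaxK hy⟩
  have hsupL : sSup (f '' L) = f xL :=
    IsGreatest.csSup_eq ⟨Set.mem_image_of_mem _ hxL, by
      rintro z ⟨y, hy, rfl⟩; exact hmaxL hy⟩
  -- the segment from xK to xL lies in K ∪ L and meets K ∩ L
  have hseg : segment ℝ xK xL ⊆ K ∪ L :=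
    hU.segment_subset (Set.mem_union_left _ hxK) (Set.mem_union_right _ hxL)
  have hconn : IsPreconnected (segment ℝ xK xL) := (convex_segment xK xL).isPreconnected
  have hmeet : (segment ℝ xK xL ∩ (K ∩ L)).Nonempty := by
    have := (isPreconnected_closed_iff.mp hconn) K L hKc.isClosed hLc.isClosed hseg
      ⟨xK, left_mem_segment ℝ xK xL, hxK⟩ ⟨xL, right_mem_segment ℝ xK xL, hxL⟩
    exact this
  obtain ⟨w, hwseg, hwK, hwL⟩ := hmeet
  obtain ⟨a, b, ha, hb, hab, rfl⟩ := hwseg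
  have hfw : f (a • xK + b • xL) = a * f xK + b * f xL := by
    simp only [hf, inner_add_right, real_inner_smul_right]
  have hbdd : BddAbove (f '' (K ∩ L)) := ((hKc.inter_right hLc.isClosed).image hfc).bddAbove
  have hle : min (f xK) (f xL) ≤ f (a • xK + b • xL) := by
    rw [hfw]
    calc min (f xK) (f xL) = a * min (f xK) (f xL) + b * min (f xK) (f xL) := by
          rw [← add_mul, hab, one_mul]
      _ ≤ a * f xK + b * f xL :=
          add_le_add (mul_le_mul_of_nonneg_left (min_le_left _ _) ha)
            (mul_le_mul_of_nonneg_left (min_le_right _ _) hb)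
  calc min (sSup (f '' K)) (sSup (f '' L)) = min (f xK) (f xL) := by rw [hsupK, hsupL]
    _ ≤ f (a • xK + b • xL) := hle
    _ ≤ sSup (f '' (K ∩ L)) := le_csSup hbdd (Set.mem_image_of_mem _ ⟨hwK, hwL⟩)

/-- If `K ∪ L` is convex then `(K ∩ L)_u = K_u ∩ L_u`. -/
theorem faceRemoved_inter {d : ℕ} (K L : Set (EuclideanSpace ℝ (Fin d)))
    (hKc : IsCompact K) (hKconv : Convex ℝ K) (hKne : K.Nonempty)
    (hLc : IsCompact L) (hLconv : Convex ℝ L) (hLne : L.Nonempty)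
    (hU : Convex ℝ (K ∪ L))
    (u : EuclideanSpace ℝ (Fin d)) (hu : ‖u‖ = 1) :
    faceRemoved (K ∩ L) u = faceRemoved K u ∩ faceRemoved L u := by
  set f : EuclideanSpace ℝ (Fin d) → ℝ := fun y => inner ℝ u y with hf
  have hfc : Continuous f := (innerSL ℝ u).continuous
  have hbK : BddAbove (f '' K) := (hKc.image hfc).bddAbove
  have hbL : BddAbove (f '' L) := (hLc.image hfc).bddAbove
  ext x
  simp only [faceRemoved, Set.mem_inter_iff, Set.mem_setOf_eq]
  constructor
  · rintro ⟨⟨hxK, hxL⟩, hlt⟩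
    have hne : (K ∩ L).Nonempty := ⟨x, hxK, hxL⟩
    have hKle : sSup (f '' (K ∩ L)) ≤ sSup (f '' K) :=
      csSup_le_csSup hbK (hne.image f) (Set.image_mono Set.inter_subset_left)
    have hLle : sSup (f '' (K ∩ L)) ≤ sSup (f '' L) :=
      csSup_le_csSup hbL (hne.image f) (Set.image_mono Set.inter_subset_right)
    exact ⟨⟨hxK, lt_of_lt_of_le hlt hKle⟩, ⟨hxL, lt_of_lt_of_le hlt hLle⟩⟩
  · rintro ⟨⟨hxK, hltK⟩, ⟨hxL, hltL⟩⟩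
    refine ⟨⟨hxK, hxL⟩, ?_⟩
    have := key_sup_min K L hKc hKne hLc hLne hU u
    exact lt_of_lt_of_le (lt_min hltK hltL) this
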